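/- Let G be a finite simple graph and let g, f : V(G) → ℕ be functions with g(x) ≤ f(x) for all x ∈ V(G). If there exists a subset S ⊆ V(G) with g(S) − f(T) + Σ_{x∈T} d_{G−S}(x) < 0, where T = {v ∈ V(G) − S : d_{G−S}(v) < f(v)}, then G does not have all fractional (g,f)-factors; more precisely, the function h defined by h(v) = g(v) for v ∈ S and h(v) = f(v) for v ∉ S satisfies g ≤ h ≤ f and G has no fractional h-factor. -/

import Mathlib

open Finset

/-- The degree of `v` in the induced subgraph `G − S` (on `V(G) \ S`), i.e. the number of
neighbors of `v` in `G` that lie outside `S`. -/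
def dOut {V : Type*} [Fintype V] [DecidableEq V] (G : SimpleGraph V) [DecidableRel G.Adj]
    (S : Finset V) (v : V) : ℕ :=
  (G.neighborFinset v \ S).card

/-- `Tset G f S = {v ∈ V(G) − S : d_{G−S}(v) < f v}`. -/
def Tset {V : Type*} [Fintype V] [DecidableEq V] (G : SimpleGraph V) [DecidableRel G.Adj]
    (f : V → ℕ) (S : Finset V) : Finset V :=
  Sᶜ.filter fun v => dOut G S v < f v

/-- `h` is (the indicator function of) a fractional `(g,f)`-factor of `G`:
`0 ≤ h(e) ≤ 1` on every edge and `g x ≤ Σ_{e ∋ x} h e ≤ f x` for every vertex `x`. -/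
def IsFracFactor {V : Type*} [Fintype V] [DecidableEq V] (G : SimpleGraph V)
    [DecidableRel G.Adj] (g f : V → ℕ) (h : Sym2 V → ℝ) : Prop :=
  (∀ e ∈ G.edgeFinset, 0 ≤ h e ∧ h e ≤ 1) ∧
  ∀ x : V, (g x : ℝ) ≤ ∑ e ∈ G.incidenceFinset x, h e ∧
    ∑ e ∈ G.incidenceFinset x, h e ≤ (f x : ℝ)

/-- `G` has all fractional `(g,f)`-factors: for every `q : V → ℕ` with `g ≤ q ≤ f`
pointwise, `G` has a fractional `q`-factor (a fractional `(q,q)`-factor). -/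
def HasAllFracFactors {V : Type*} [Fintype V] [DecidableEq V] (G : SimpleGraph V)
    [DecidableRel G.Adj] (g f : V → ℕ) : Prop :=
  ∀ q : V → ℕ, (∀ v, g v ≤ q v) → (∀ v, q v ≤ f v) → ∃ h, IsFracFactor G q q h

lemma incidenceFinset_eq_image' {V : Type*} [Fintype V] [DecidableEq V] (G : SimpleGraph V)
    [DecidableRel G.Adj] (v : V) :
    G.incidenceFinset v = (G.neighborFinset v).image (fun u => s(v, u)) := by
  ext e
  simp only [SimpleGraph.mem_incidenceFinset, SimpleGraph.incidenceSet, Set.mem_setOf_eq,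
    mem_image, SimpleGraph.mem_neighborFinset, SimpleGraph.mem_edgeSet]
  constructor
  · rintro ⟨he, hv⟩
    induction e with
    | _ a b =>
      rcases Sym2.mem_iff.mp hv with rfl | rfl
      · exact ⟨b, he, rfl⟩
      · exact ⟨a, G.adj_symm he, Sym2.eq_swap⟩
  · rintro ⟨u, hu, rfl⟩
    exact ⟨hu, Sym2.mem_mk_left v u⟩

lemma sum_incidence' {V : Type*} [Fintype V] [DecidableEq V] (G : SimpleGraph V)
    [DecidableRel G.Adj] (h : Sym2 V → ℝ) (v : V) :
    ∑ e ∈ G.incidenceFinset v, h e = ∑ u ∈ G.neighborFinset v, h s(v, u) := by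
  rw [incidenceFinset_eq_image', Finset.sum_image]
  intro a ha b hb hab
  replace ha : G.Adj v a := by simpa using ha
  rcases (Sym2.mk_eq_mk_iff (p := (v, a)) (q := (v, b))).mp hab with h1 | h1
  · exact (Prod.ext_iff.mp h1).2
  · obtain ⟨h2, h3⟩ := Prod.ext_iff.mp h1
    simp at h2 h3; subst h2; exact absurd h3.symm (G.ne_of_adj ha)

lemma key_no_factor {V : Type*} [Fintype V] [DecidableEq V]
    (G : SimpleGraph V) [DecidableRel G.Adj] (g f : V → ℕ)
    (S : Finset V)
    (hS : (∑ v ∈ S, (g v : ℤ)) - (∑ v ∈ Tset G f S, (f v : ℤ)) +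
        ∑ v ∈ Tset G f S, (dOut G S v : ℤ) < 0) :
    ¬ ∃ h' : Sym2 V → ℝ,
        IsFracFactor G (fun v => if v ∈ S then g v else f v)
          (fun v => if v ∈ S then g v else f v) h' := by
  rintro ⟨h, hbd, hsum⟩
  set q : V → ℕ := fun v => if v ∈ S then g v else f v with hq
  set T := Tset G f S with hT
  have E : ∀ x, ∑ e ∈ G.incidenceFinset x, h e = (q x : ℝ) :=
    fun x => le_antisymm (hsum x).2 (hsum x).1
  have hb : ∀ v u, G.Adj v u → 0 ≤ h s(v, u) ∧ h s(v, u) ≤ 1 := by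
    intro v u hu
    exact hbd _ (SimpleGraph.mem_edgeFinset.mpr ((SimpleGraph.mem_edgeSet G).mpr hu))
  -- inner sums over neighbors, rewritten via filter over a finset
  have inner_eq : ∀ (v : V) (W : Finset V),
      ∑ u ∈ G.neighborFinset v ∩ W, h s(v, u)
        = ∑ u ∈ W, if G.Adj v u then h s(v, u) else 0 := by
    intro v W
    rw [← Finset.sum_filter]
    congr 1
    ext u
    simp [SimpleGraph.mem_neighborFinset, and_comm]
  set A : ℝ := ∑ v ∈ T, ∑ u ∈ G.neighborFinset v ∩ S, h s(v, u) with hA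
  -- step 1 : f(T) ≤ A + ∑_{T} dOut
  have step1 : (∑ v ∈ T, (f v : ℝ)) ≤ A + ∑ v ∈ T, (dOut G S v : ℝ) := by
    rw [hA, ← Finset.sum_add_distrib]
    apply Finset.sum_le_sum
    intro v hv
    have hvS : v ∉ S := by
      have := (Finset.mem_filter.mp hv).1
      simpa using this
    have hqv : (q v : ℝ) = f v := by simp [hq, hvS]
    have hsplit : ∑ u ∈ G.neighborFinset v ∩ S, h s(v, u)
        + ∑ u ∈ G.neighborFinset v \ S, h s(v, u)
        = ∑ u ∈ G.neighborFinset v, h s(v, u) :=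
      Finset.sum_inter_add_sum_sdiff _ _ _
    have hbound : ∑ u ∈ G.neighborFinset v \ S, h s(v, u) ≤ (dOut G S v : ℝ) := by
      have := Finset.sum_le_card_nsmul (G.neighborFinset v \ S) (fun u => h s(v, u)) 1
        (by intro u hu
            exact (hb v u ((G.mem_neighborFinset v u).mp (Finset.mem_sdiff.mp hu).1)).2)
      simpa [dOut] using this
    have := E v
    rw [sum_incidence'] at this
    rw [← hsplit] at this
    rw [← hqv]
    linarith
  -- step 2 : A ≤ g(S)
  have step2 : A ≤ ∑ v ∈ S, (g v : ℝ) := by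
    have hswap : A = ∑ u ∈ S, ∑ v ∈ T, if G.Adj u v then h s(u, v) else 0 := by
      rw [hA]
      rw [Finset.sum_congr rfl (fun v _ => inner_eq v S)]
      rw [Finset.sum_comm]
      refine Finset.sum_congr rfl fun u _ => Finset.sum_congr rfl fun v _ => ?_
      exact if_congr (G.adj_comm u v).symm (congrArg h Sym2.eq_swap) rfl
    rw [hswap]
    apply Finset.sum_le_sum
    intro u hu
    have h1 : ∑ v ∈ T, (if G.Adj u v then h s(u, v) else 0)
        ≤ ∑ v : V, (if G.Adj u v then h s(u, v) else 0) := by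
      apply Finset.sum_le_sum_of_subset_of_nonneg (Finset.subset_univ T)
      intro v _ _
      by_cases hadj : G.Adj u v
      · simp [hadj, (hb u v hadj).1]
      · simp [hadj]
    have h2 : ∑ v : V, (if G.Adj u v then h s(u, v) else 0) = (g u : ℝ) := by
      rw [← inner_eq u Finset.univ]
      have := E u
      rw [sum_incidence'] at this
      rw [Finset.inter_univ, this]
      simp [hq, hu]
    linarith
  have hR : (∑ v ∈ S, (g v : ℝ)) - (∑ v ∈ T, (f v : ℝ)) + ∑ v ∈ T, (dOut G S v : ℝ) < 0 := by
    exact_mod_cast hS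
  linarith


/-- Necessity in Theorem 5: if some `S ⊆ V(G)` violates the condition, then `G` does not
have all fractional `(g,f)`-factors; more precisely, the function `h` equal to `g` on `S`
and to `f` off `S` satisfies `g ≤ h ≤ f` and `G` has no fractional `h`-factor. -/
theorem no_fractional_factor_of_violation {V : Type*} [Fintype V] [DecidableEq V]
    (G : SimpleGraph V) [DecidableRel G.Adj] (g f : V → ℕ) (hgf : ∀ x, g x ≤ f x)
    (S : Finset V)
    (hS : (∑ v ∈ S, (g v : ℤ)) - (∑ v ∈ Tset G f S, (f v : ℤ)) +
        ∑ v ∈ Tset G f S, (dOut G S v : ℤ) < 0) :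
    ¬ HasAllFracFactors G g f ∧
      (∀ v, g v ≤ (if v ∈ S then g v else f v) ∧ (if v ∈ S then g v else f v) ≤ f v) ∧
      ¬ ∃ h' : Sym2 V → ℝ,
        IsFracFactor G (fun v => if v ∈ S then g v else f v)
          (fun v => if v ∈ S then g v else f v) h' := by
  have hmid : ∀ v, g v ≤ (if v ∈ S then g v else f v) ∧ (if v ∈ S then g v else f v) ≤ f v := by
    intro v; by_cases hv : v ∈ S <;> simp [hv, hgf v]
  have hkey := key_no_factor G g f S hS
  refine ⟨?_, hmid, hkey⟩
  intro hall
  exact hkey (hall _ (fun v => (hmid v).1) (fun v => (hmid v).2))
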